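/- Let v, E, e, h, k ∈ ℝ⁴ and let ε, ε′, μ₀ be real numbers with ε ≠ 0 and μ₀ ≠ 0. Assume η_{μν}v^μv^ν = 1, η_{μν}E^μv^ν = 0, and Ē := √(−η_{μν}E^μE^ν) > 0. Suppose the Hadamard discontinuity relations of the nonlinear-dielectric Maxwell equations hold: (i) ε k^α e_α − (ε′/Ē) (E^α e_α)(E^β k_β) = 0; (ii) μ₀ h^α k_α = 0; (iii) ε (k^α v_α) e^μ − (ε′/Ē)(E^λ e_λ)(k^α v_α) E^μ + η^{μναβ} k_ν v_α h_β = 0 for all μ; (iv) μ₀ (k_α v^α) h^λ − η^{λβρσ} k_β v_ρ e_σ = 0 for all λ. If moreover E^α e_α ≠ 0 and k^α v_α ≠ 0, then the wave vector satisfies the effective-metric dispersion relation: ( η^{μν} + (μ₀ε − 1 + μ₀ε′Ē) v^μ v^ν − (ε′/(εĒ)) E^μ E^ν ) k_μ k_ν = 0. -/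

import Mathlib

open scoped BigOperators

noncomputable section

/-- The Minkowski metric η = diag(1,-1,-1,-1) (same components for η_{μν} and η^{μν}). -/
def η (μ ν : Fin 4) : ℝ := if μ = ν then (if μ = 0 then 1 else -1) else 0

/-- The Levi-Civita symbol ε_{abcd} on four indices, with ε₀₁₂₃ = 1. -/
def lc (a b c d : Fin 4) : ℝ :=
  ∑ σ : Equiv.Perm (Fin 4),
    if σ 0 = a ∧ σ 1 = b ∧ σ 2 = c ∧ σ 3 = d then ((Equiv.Perm.sign σ : ℤ) : ℝ) else 0

/-- Fully contravariant Levi-Civita tensor η^{μναβ}: all indices of ε raised with η. -/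
def lcup (μ ν a b : Fin 4) : ℝ :=
  ∑ p, ∑ q, ∑ r, ∑ s, η μ p * η ν q * η a r * η b s * lc p q r s

/-- Minkowski scalar product of two (contravariant) four-vectors. -/
def mdot (u w : Fin 4 → ℝ) : ℝ := ∑ μ, ∑ ν, η μ ν * u μ * w ν

/-- Integer-valued Levi-Civita symbol, for computation. -/
def lcZ (a b c d : Fin 4) : ℤ :=
  ∑ σ : Equiv.Perm (Fin 4),
    if σ 0 = a ∧ σ 1 = b ∧ σ 2 = c ∧ σ 3 = d then ((Equiv.Perm.sign σ : ℤ)) else 0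

lemma lc_cast (a b c d : Fin 4) : lc a b c d = ((lcZ a b c d : ℤ) : ℝ) := by
  unfold lc lcZ; push_cast; rfl

lemma eta_collapse (c : Fin 4) (f : Fin 4 → ℝ) : (∑ p, η c p * f p) = η c c * f c := by
  fin_cases c <;> simp [Fin.sum_univ_four, η]

lemma lcup_diag (μ ν a b : Fin 4) :
    lcup μ ν a b = η μ μ * (η ν ν * (η a a * (η b b * lc μ ν a b))) := by
  calc lcup μ ν a b
      = ∑ p, η μ p * ∑ q, η ν q * ∑ r, η a r * ∑ s, η b s * lc p q r s := by
        unfold lcup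
        simp only [Finset.mul_sum]
        exact Finset.sum_congr rfl fun p _ => Finset.sum_congr rfl fun q _ =>
          Finset.sum_congr rfl fun r _ => Finset.sum_congr rfl fun s _ => by ring
    _ = η μ μ * (η ν ν * (η a a * (η b b * lc μ ν a b))) := by
        rw [eta_collapse, eta_collapse, eta_collapse, eta_collapse]

@[simp] lemma lcE_0000 : lc 0 0 0 0 = 0 := by rw [lc_cast]; norm_num [show lcZ 0 0 0 0 = 0 from by decide]
@[simp] lemma lcE_0001 : lc 0 0 0 1 = 0 := by rw [lc_cast]; norm_num [show lcZ 0 0 0 1 = 0 from by decide]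
@[simp] lemma lcE_0002 : lc 0 0 0 2 = 0 := by rw [lc_cast]; norm_num [show lcZ 0 0 0 2 = 0 from by decide]
@[simp] lemma lcE_0003 : lc 0 0 0 3 = 0 := by rw [lc_cast]; norm_num [show lcZ 0 0 0 3 = 0 from by decide]
@[simp] lemma lcE_0010 : lc 0 0 1 0 = 0 := by rw [lc_cast]; norm_num [show lcZ 0 0 1 0 = 0 from by decide]
@[simp] lemma lcE_0011 : lc 0 0 1 1 = 0 := by rw [lc_cast]; norm_num [show lcZ 0 0 1 1 = 0 from by decide]
@[simp] lemma lcE_0012 : lc 0 0 1 2 = 0 := by rw [lc_cast]; norm_num [show lcZ 0 0 1 2 = 0 from by decide]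
@[simp] lemma lcE_0013 : lc 0 0 1 3 = 0 := by rw [lc_cast]; norm_num [show lcZ 0 0 1 3 = 0 from by decide]
@[simp] lemma lcE_0020 : lc 0 0 2 0 = 0 := by rw [lc_cast]; norm_num [show lcZ 0 0 2 0 = 0 from by decide]
@[simp] lemma lcE_0021 : lc 0 0 2 1 = 0 := by rw [lc_cast]; norm_num [show lcZ 0 0 2 1 = 0 from by decide]
@[simp] lemma lcE_0022 : lc 0 0 2 2 = 0 := by rw [lc_cast]; norm_num [show lcZ 0 0 2 2 = 0 from by decide]
@[simp] lemma lcE_0023 : lc 0 0 2 3 = 0 := by rw [lc_cast]; norm_num [show lcZ 0 0 2 3 = 0 from by decide]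
@[simp] lemma lcE_0030 : lc 0 0 3 0 = 0 := by rw [lc_cast]; norm_num [show lcZ 0 0 3 0 = 0 from by decide]
@[simp] lemma lcE_0031 : lc 0 0 3 1 = 0 := by rw [lc_cast]; norm_num [show lcZ 0 0 3 1 = 0 from by decide]
@[simp] lemma lcE_0032 : lc 0 0 3 2 = 0 := by rw [lc_cast]; norm_num [show lcZ 0 0 3 2 = 0 from by decide]
@[simp] lemma lcE_0033 : lc 0 0 3 3 = 0 := by rw [lc_cast]; norm_num [show lcZ 0 0 3 3 = 0 from by decide]
@[simp] lemma lcE_0100 : lc 0 1 0 0 = 0 := by rw [lc_cast]; norm_num [show lcZ 0 1 0 0 = 0 from by decide]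
@[simp] lemma lcE_0101 : lc 0 1 0 1 = 0 := by rw [lc_cast]; norm_num [show lcZ 0 1 0 1 = 0 from by decide]
@[simp] lemma lcE_0102 : lc 0 1 0 2 = 0 := by rw [lc_cast]; norm_num [show lcZ 0 1 0 2 = 0 from by decide]
@[simp] lemma lcE_0103 : lc 0 1 0 3 = 0 := by rw [lc_cast]; norm_num [show lcZ 0 1 0 3 = 0 from by decide]
@[simp] lemma lcE_0110 : lc 0 1 1 0 = 0 := by rw [lc_cast]; norm_num [show lcZ 0 1 1 0 = 0 from by decide]
@[simp] lemma lcE_0111 : lc 0 1 1 1 = 0 := by rw [lc_cast]; norm_num [show lcZ 0 1 1 1 = 0 from by decide]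
@[simp] lemma lcE_0112 : lc 0 1 1 2 = 0 := by rw [lc_cast]; norm_num [show lcZ 0 1 1 2 = 0 from by decide]
@[simp] lemma lcE_0113 : lc 0 1 1 3 = 0 := by rw [lc_cast]; norm_num [show lcZ 0 1 1 3 = 0 from by decide]
@[simp] lemma lcE_0120 : lc 0 1 2 0 = 0 := by rw [lc_cast]; norm_num [show lcZ 0 1 2 0 = 0 from by decide]
@[simp] lemma lcE_0121 : lc 0 1 2 1 = 0 := by rw [lc_cast]; norm_num [show lcZ 0 1 2 1 = 0 from by decide]
@[simp] lemma lcE_0122 : lc 0 1 2 2 = 0 := by rw [lc_cast]; norm_num [show lcZ 0 1 2 2 = 0 from by decide]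
@[simp] lemma lcE_0123 : lc 0 1 2 3 = 1 := by rw [lc_cast]; norm_num [show lcZ 0 1 2 3 = 1 from by decide]
@[simp] lemma lcE_0130 : lc 0 1 3 0 = 0 := by rw [lc_cast]; norm_num [show lcZ 0 1 3 0 = 0 from by decide]
@[simp] lemma lcE_0131 : lc 0 1 3 1 = 0 := by rw [lc_cast]; norm_num [show lcZ 0 1 3 1 = 0 from by decide]
@[simp] lemma lcE_0132 : lc 0 1 3 2 = -1 := by rw [lc_cast]; norm_num [show lcZ 0 1 3 2 = -1 from by decide]
@[simp] lemma lcE_0133 : lc 0 1 3 3 = 0 := by rw [lc_cast]; norm_num [show lcZ 0 1 3 3 = 0 from by decide]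
@[simp] lemma lcE_0200 : lc 0 2 0 0 = 0 := by rw [lc_cast]; norm_num [show lcZ 0 2 0 0 = 0 from by decide]
@[simp] lemma lcE_0201 : lc 0 2 0 1 = 0 := by rw [lc_cast]; norm_num [show lcZ 0 2 0 1 = 0 from by decide]
@[simp] lemma lcE_0202 : lc 0 2 0 2 = 0 := by rw [lc_cast]; norm_num [show lcZ 0 2 0 2 = 0 from by decide]
@[simp] lemma lcE_0203 : lc 0 2 0 3 = 0 := by rw [lc_cast]; norm_num [show lcZ 0 2 0 3 = 0 from by decide]
@[simp] lemma lcE_0210 : lc 0 2 1 0 = 0 := by rw [lc_cast]; norm_num [show lcZ 0 2 1 0 = 0 from by decide]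
@[simp] lemma lcE_0211 : lc 0 2 1 1 = 0 := by rw [lc_cast]; norm_num [show lcZ 0 2 1 1 = 0 from by decide]
@[simp] lemma lcE_0212 : lc 0 2 1 2 = 0 := by rw [lc_cast]; norm_num [show lcZ 0 2 1 2 = 0 from by decide]
@[simp] lemma lcE_0213 : lc 0 2 1 3 = -1 := by rw [lc_cast]; norm_num [show lcZ 0 2 1 3 = -1 from by decide]
@[simp] lemma lcE_0220 : lc 0 2 2 0 = 0 := by rw [lc_cast]; norm_num [show lcZ 0 2 2 0 = 0 from by decide]
@[simp] lemma lcE_0221 : lc 0 2 2 1 = 0 := by rw [lc_cast]; norm_num [show lcZ 0 2 2 1 = 0 from by decide]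
@[simp] lemma lcE_0222 : lc 0 2 2 2 = 0 := by rw [lc_cast]; norm_num [show lcZ 0 2 2 2 = 0 from by decide]
@[simp] lemma lcE_0223 : lc 0 2 2 3 = 0 := by rw [lc_cast]; norm_num [show lcZ 0 2 2 3 = 0 from by decide]
@[simp] lemma lcE_0230 : lc 0 2 3 0 = 0 := by rw [lc_cast]; norm_num [show lcZ 0 2 3 0 = 0 from by decide]
@[simp] lemma lcE_0231 : lc 0 2 3 1 = 1 := by rw [lc_cast]; norm_num [show lcZ 0 2 3 1 = 1 from by decide]
@[simp] lemma lcE_0232 : lc 0 2 3 2 = 0 := by rw [lc_cast]; norm_num [show lcZ 0 2 3 2 = 0 from by decide]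
@[simp] lemma lcE_0233 : lc 0 2 3 3 = 0 := by rw [lc_cast]; norm_num [show lcZ 0 2 3 3 = 0 from by decide]
@[simp] lemma lcE_0300 : lc 0 3 0 0 = 0 := by rw [lc_cast]; norm_num [show lcZ 0 3 0 0 = 0 from by decide]
@[simp] lemma lcE_0301 : lc 0 3 0 1 = 0 := by rw [lc_cast]; norm_num [show lcZ 0 3 0 1 = 0 from by decide]
@[simp] lemma lcE_0302 : lc 0 3 0 2 = 0 := by rw [lc_cast]; norm_num [show lcZ 0 3 0 2 = 0 from by decide]
@[simp] lemma lcE_0303 : lc 0 3 0 3 = 0 := by rw [lc_cast]; norm_num [show lcZ 0 3 0 3 = 0 from by decide]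
@[simp] lemma lcE_0310 : lc 0 3 1 0 = 0 := by rw [lc_cast]; norm_num [show lcZ 0 3 1 0 = 0 from by decide]
@[simp] lemma lcE_0311 : lc 0 3 1 1 = 0 := by rw [lc_cast]; norm_num [show lcZ 0 3 1 1 = 0 from by decide]
@[simp] lemma lcE_0312 : lc 0 3 1 2 = 1 := by rw [lc_cast]; norm_num [show lcZ 0 3 1 2 = 1 from by decide]
@[simp] lemma lcE_0313 : lc 0 3 1 3 = 0 := by rw [lc_cast]; norm_num [show lcZ 0 3 1 3 = 0 from by decide]
@[simp] lemma lcE_0320 : lc 0 3 2 0 = 0 := by rw [lc_cast]; norm_num [show lcZ 0 3 2 0 = 0 from by decide]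
@[simp] lemma lcE_0321 : lc 0 3 2 1 = -1 := by rw [lc_cast]; norm_num [show lcZ 0 3 2 1 = -1 from by decide]
@[simp] lemma lcE_0322 : lc 0 3 2 2 = 0 := by rw [lc_cast]; norm_num [show lcZ 0 3 2 2 = 0 from by decide]
@[simp] lemma lcE_0323 : lc 0 3 2 3 = 0 := by rw [lc_cast]; norm_num [show lcZ 0 3 2 3 = 0 from by decide]
@[simp] lemma lcE_0330 : lc 0 3 3 0 = 0 := by rw [lc_cast]; norm_num [show lcZ 0 3 3 0 = 0 from by decide]
@[simp] lemma lcE_0331 : lc 0 3 3 1 = 0 := by rw [lc_cast]; norm_num [show lcZ 0 3 3 1 = 0 from by decide]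
@[simp] lemma lcE_0332 : lc 0 3 3 2 = 0 := by rw [lc_cast]; norm_num [show lcZ 0 3 3 2 = 0 from by decide]
@[simp] lemma lcE_0333 : lc 0 3 3 3 = 0 := by rw [lc_cast]; norm_num [show lcZ 0 3 3 3 = 0 from by decide]
@[simp] lemma lcE_1000 : lc 1 0 0 0 = 0 := by rw [lc_cast]; norm_num [show lcZ 1 0 0 0 = 0 from by decide]
@[simp] lemma lcE_1001 : lc 1 0 0 1 = 0 := by rw [lc_cast]; norm_num [show lcZ 1 0 0 1 = 0 from by decide]
@[simp] lemma lcE_1002 : lc 1 0 0 2 = 0 := by rw [lc_cast]; norm_num [show lcZ 1 0 0 2 = 0 from by decide]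
@[simp] lemma lcE_1003 : lc 1 0 0 3 = 0 := by rw [lc_cast]; norm_num [show lcZ 1 0 0 3 = 0 from by decide]
@[simp] lemma lcE_1010 : lc 1 0 1 0 = 0 := by rw [lc_cast]; norm_num [show lcZ 1 0 1 0 = 0 from by decide]
@[simp] lemma lcE_1011 : lc 1 0 1 1 = 0 := by rw [lc_cast]; norm_num [show lcZ 1 0 1 1 = 0 from by decide]
@[simp] lemma lcE_1012 : lc 1 0 1 2 = 0 := by rw [lc_cast]; norm_num [show lcZ 1 0 1 2 = 0 from by decide]
@[simp] lemma lcE_1013 : lc 1 0 1 3 = 0 := by rw [lc_cast]; norm_num [show lcZ 1 0 1 3 = 0 from by decide]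
@[simp] lemma lcE_1020 : lc 1 0 2 0 = 0 := by rw [lc_cast]; norm_num [show lcZ 1 0 2 0 = 0 from by decide]
@[simp] lemma lcE_1021 : lc 1 0 2 1 = 0 := by rw [lc_cast]; norm_num [show lcZ 1 0 2 1 = 0 from by decide]
@[simp] lemma lcE_1022 : lc 1 0 2 2 = 0 := by rw [lc_cast]; norm_num [show lcZ 1 0 2 2 = 0 from by decide]
@[simp] lemma lcE_1023 : lc 1 0 2 3 = -1 := by rw [lc_cast]; norm_num [show lcZ 1 0 2 3 = -1 from by decide]
@[simp] lemma lcE_1030 : lc 1 0 3 0 = 0 := by rw [lc_cast]; norm_num [show lcZ 1 0 3 0 = 0 from by decide]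
@[simp] lemma lcE_1031 : lc 1 0 3 1 = 0 := by rw [lc_cast]; norm_num [show lcZ 1 0 3 1 = 0 from by decide]
@[simp] lemma lcE_1032 : lc 1 0 3 2 = 1 := by rw [lc_cast]; norm_num [show lcZ 1 0 3 2 = 1 from by decide]
@[simp] lemma lcE_1033 : lc 1 0 3 3 = 0 := by rw [lc_cast]; norm_num [show lcZ 1 0 3 3 = 0 from by decide]
@[simp] lemma lcE_1100 : lc 1 1 0 0 = 0 := by rw [lc_cast]; norm_num [show lcZ 1 1 0 0 = 0 from by decide]
@[simp] lemma lcE_1101 : lc 1 1 0 1 = 0 := by rw [lc_cast]; norm_num [show lcZ 1 1 0 1 = 0 from by decide]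
@[simp] lemma lcE_1102 : lc 1 1 0 2 = 0 := by rw [lc_cast]; norm_num [show lcZ 1 1 0 2 = 0 from by decide]
@[simp] lemma lcE_1103 : lc 1 1 0 3 = 0 := by rw [lc_cast]; norm_num [show lcZ 1 1 0 3 = 0 from by decide]
@[simp] lemma lcE_1110 : lc 1 1 1 0 = 0 := by rw [lc_cast]; norm_num [show lcZ 1 1 1 0 = 0 from by decide]
@[simp] lemma lcE_1111 : lc 1 1 1 1 = 0 := by rw [lc_cast]; norm_num [show lcZ 1 1 1 1 = 0 from by decide]
@[simp] lemma lcE_1112 : lc 1 1 1 2 = 0 := by rw [lc_cast]; norm_num [show lcZ 1 1 1 2 = 0 from by decide]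
@[simp] lemma lcE_1113 : lc 1 1 1 3 = 0 := by rw [lc_cast]; norm_num [show lcZ 1 1 1 3 = 0 from by decide]
@[simp] lemma lcE_1120 : lc 1 1 2 0 = 0 := by rw [lc_cast]; norm_num [show lcZ 1 1 2 0 = 0 from by decide]
@[simp] lemma lcE_1121 : lc 1 1 2 1 = 0 := by rw [lc_cast]; norm_num [show lcZ 1 1 2 1 = 0 from by decide]
@[simp] lemma lcE_1122 : lc 1 1 2 2 = 0 := by rw [lc_cast]; norm_num [show lcZ 1 1 2 2 = 0 from by decide]
@[simp] lemma lcE_1123 : lc 1 1 2 3 = 0 := by rw [lc_cast]; norm_num [show lcZ 1 1 2 3 = 0 from by decide]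
@[simp] lemma lcE_1130 : lc 1 1 3 0 = 0 := by rw [lc_cast]; norm_num [show lcZ 1 1 3 0 = 0 from by decide]
@[simp] lemma lcE_1131 : lc 1 1 3 1 = 0 := by rw [lc_cast]; norm_num [show lcZ 1 1 3 1 = 0 from by decide]
@[simp] lemma lcE_1132 : lc 1 1 3 2 = 0 := by rw [lc_cast]; norm_num [show lcZ 1 1 3 2 = 0 from by decide]
@[simp] lemma lcE_1133 : lc 1 1 3 3 = 0 := by rw [lc_cast]; norm_num [show lcZ 1 1 3 3 = 0 from by decide]
@[simp] lemma lcE_1200 : lc 1 2 0 0 = 0 := by rw [lc_cast]; norm_num [show lcZ 1 2 0 0 = 0 from by decide]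
@[simp] lemma lcE_1201 : lc 1 2 0 1 = 0 := by rw [lc_cast]; norm_num [show lcZ 1 2 0 1 = 0 from by decide]
@[simp] lemma lcE_1202 : lc 1 2 0 2 = 0 := by rw [lc_cast]; norm_num [show lcZ 1 2 0 2 = 0 from by decide]
@[simp] lemma lcE_1203 : lc 1 2 0 3 = 1 := by rw [lc_cast]; norm_num [show lcZ 1 2 0 3 = 1 from by decide]
@[simp] lemma lcE_1210 : lc 1 2 1 0 = 0 := by rw [lc_cast]; norm_num [show lcZ 1 2 1 0 = 0 from by decide]
@[simp] lemma lcE_1211 : lc 1 2 1 1 = 0 := by rw [lc_cast]; norm_num [show lcZ 1 2 1 1 = 0 from by decide]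
@[simp] lemma lcE_1212 : lc 1 2 1 2 = 0 := by rw [lc_cast]; norm_num [show lcZ 1 2 1 2 = 0 from by decide]
@[simp] lemma lcE_1213 : lc 1 2 1 3 = 0 := by rw [lc_cast]; norm_num [show lcZ 1 2 1 3 = 0 from by decide]
@[simp] lemma lcE_1220 : lc 1 2 2 0 = 0 := by rw [lc_cast]; norm_num [show lcZ 1 2 2 0 = 0 from by decide]
@[simp] lemma lcE_1221 : lc 1 2 2 1 = 0 := by rw [lc_cast]; norm_num [show lcZ 1 2 2 1 = 0 from by decide]
@[simp] lemma lcE_1222 : lc 1 2 2 2 = 0 := by rw [lc_cast]; norm_num [show lcZ 1 2 2 2 = 0 from by decide]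
@[simp] lemma lcE_1223 : lc 1 2 2 3 = 0 := by rw [lc_cast]; norm_num [show lcZ 1 2 2 3 = 0 from by decide]
@[simp] lemma lcE_1230 : lc 1 2 3 0 = -1 := by rw [lc_cast]; norm_num [show lcZ 1 2 3 0 = -1 from by decide]
@[simp] lemma lcE_1231 : lc 1 2 3 1 = 0 := by rw [lc_cast]; norm_num [show lcZ 1 2 3 1 = 0 from by decide]
@[simp] lemma lcE_1232 : lc 1 2 3 2 = 0 := by rw [lc_cast]; norm_num [show lcZ 1 2 3 2 = 0 from by decide]
@[simp] lemma lcE_1233 : lc 1 2 3 3 = 0 := by rw [lc_cast]; norm_num [show lcZ 1 2 3 3 = 0 from by decide]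
@[simp] lemma lcE_1300 : lc 1 3 0 0 = 0 := by rw [lc_cast]; norm_num [show lcZ 1 3 0 0 = 0 from by decide]
@[simp] lemma lcE_1301 : lc 1 3 0 1 = 0 := by rw [lc_cast]; norm_num [show lcZ 1 3 0 1 = 0 from by decide]
@[simp] lemma lcE_1302 : lc 1 3 0 2 = -1 := by rw [lc_cast]; norm_num [show lcZ 1 3 0 2 = -1 from by decide]
@[simp] lemma lcE_1303 : lc 1 3 0 3 = 0 := by rw [lc_cast]; norm_num [show lcZ 1 3 0 3 = 0 from by decide]
@[simp] lemma lcE_1310 : lc 1 3 1 0 = 0 := by rw [lc_cast]; norm_num [show lcZ 1 3 1 0 = 0 from by decide]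
@[simp] lemma lcE_1311 : lc 1 3 1 1 = 0 := by rw [lc_cast]; norm_num [show lcZ 1 3 1 1 = 0 from by decide]
@[simp] lemma lcE_1312 : lc 1 3 1 2 = 0 := by rw [lc_cast]; norm_num [show lcZ 1 3 1 2 = 0 from by decide]
@[simp] lemma lcE_1313 : lc 1 3 1 3 = 0 := by rw [lc_cast]; norm_num [show lcZ 1 3 1 3 = 0 from by decide]
@[simp] lemma lcE_1320 : lc 1 3 2 0 = 1 := by rw [lc_cast]; norm_num [show lcZ 1 3 2 0 = 1 from by decide]
@[simp] lemma lcE_1321 : lc 1 3 2 1 = 0 := by rw [lc_cast]; norm_num [show lcZ 1 3 2 1 = 0 from by decide]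
@[simp] lemma lcE_1322 : lc 1 3 2 2 = 0 := by rw [lc_cast]; norm_num [show lcZ 1 3 2 2 = 0 from by decide]
@[simp] lemma lcE_1323 : lc 1 3 2 3 = 0 := by rw [lc_cast]; norm_num [show lcZ 1 3 2 3 = 0 from by decide]
@[simp] lemma lcE_1330 : lc 1 3 3 0 = 0 := by rw [lc_cast]; norm_num [show lcZ 1 3 3 0 = 0 from by decide]
@[simp] lemma lcE_1331 : lc 1 3 3 1 = 0 := by rw [lc_cast]; norm_num [show lcZ 1 3 3 1 = 0 from by decide]
@[simp] lemma lcE_1332 : lc 1 3 3 2 = 0 := by rw [lc_cast]; norm_num [show lcZ 1 3 3 2 = 0 from by decide]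
@[simp] lemma lcE_1333 : lc 1 3 3 3 = 0 := by rw [lc_cast]; norm_num [show lcZ 1 3 3 3 = 0 from by decide]
@[simp] lemma lcE_2000 : lc 2 0 0 0 = 0 := by rw [lc_cast]; norm_num [show lcZ 2 0 0 0 = 0 from by decide]
@[simp] lemma lcE_2001 : lc 2 0 0 1 = 0 := by rw [lc_cast]; norm_num [show lcZ 2 0 0 1 = 0 from by decide]
@[simp] lemma lcE_2002 : lc 2 0 0 2 = 0 := by rw [lc_cast]; norm_num [show lcZ 2 0 0 2 = 0 from by decide]
@[simp] lemma lcE_2003 : lc 2 0 0 3 = 0 := by rw [lc_cast]; norm_num [show lcZ 2 0 0 3 = 0 from by decide]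
@[simp] lemma lcE_2010 : lc 2 0 1 0 = 0 := by rw [lc_cast]; norm_num [show lcZ 2 0 1 0 = 0 from by decide]
@[simp] lemma lcE_2011 : lc 2 0 1 1 = 0 := by rw [lc_cast]; norm_num [show lcZ 2 0 1 1 = 0 from by decide]
@[simp] lemma lcE_2012 : lc 2 0 1 2 = 0 := by rw [lc_cast]; norm_num [show lcZ 2 0 1 2 = 0 from by decide]
@[simp] lemma lcE_2013 : lc 2 0 1 3 = 1 := by rw [lc_cast]; norm_num [show lcZ 2 0 1 3 = 1 from by decide]
@[simp] lemma lcE_2020 : lc 2 0 2 0 = 0 := by rw [lc_cast]; norm_num [show lcZ 2 0 2 0 = 0 from by decide]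
@[simp] lemma lcE_2021 : lc 2 0 2 1 = 0 := by rw [lc_cast]; norm_num [show lcZ 2 0 2 1 = 0 from by decide]
@[simp] lemma lcE_2022 : lc 2 0 2 2 = 0 := by rw [lc_cast]; norm_num [show lcZ 2 0 2 2 = 0 from by decide]
@[simp] lemma lcE_2023 : lc 2 0 2 3 = 0 := by rw [lc_cast]; norm_num [show lcZ 2 0 2 3 = 0 from by decide]
@[simp] lemma lcE_2030 : lc 2 0 3 0 = 0 := by rw [lc_cast]; norm_num [show lcZ 2 0 3 0 = 0 from by decide]
@[simp] lemma lcE_2031 : lc 2 0 3 1 = -1 := by rw [lc_cast]; norm_num [show lcZ 2 0 3 1 = -1 from by decide]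
@[simp] lemma lcE_2032 : lc 2 0 3 2 = 0 := by rw [lc_cast]; norm_num [show lcZ 2 0 3 2 = 0 from by decide]
@[simp] lemma lcE_2033 : lc 2 0 3 3 = 0 := by rw [lc_cast]; norm_num [show lcZ 2 0 3 3 = 0 from by decide]
@[simp] lemma lcE_2100 : lc 2 1 0 0 = 0 := by rw [lc_cast]; norm_num [show lcZ 2 1 0 0 = 0 from by decide]
@[simp] lemma lcE_2101 : lc 2 1 0 1 = 0 := by rw [lc_cast]; norm_num [show lcZ 2 1 0 1 = 0 from by decide]
@[simp] lemma lcE_2102 : lc 2 1 0 2 = 0 := by rw [lc_cast]; norm_num [show lcZ 2 1 0 2 = 0 from by decide]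
@[simp] lemma lcE_2103 : lc 2 1 0 3 = -1 := by rw [lc_cast]; norm_num [show lcZ 2 1 0 3 = -1 from by decide]
@[simp] lemma lcE_2110 : lc 2 1 1 0 = 0 := by rw [lc_cast]; norm_num [show lcZ 2 1 1 0 = 0 from by decide]
@[simp] lemma lcE_2111 : lc 2 1 1 1 = 0 := by rw [lc_cast]; norm_num [show lcZ 2 1 1 1 = 0 from by decide]
@[simp] lemma lcE_2112 : lc 2 1 1 2 = 0 := by rw [lc_cast]; norm_num [show lcZ 2 1 1 2 = 0 from by decide]
@[simp] lemma lcE_2113 : lc 2 1 1 3 = 0 := by rw [lc_cast]; norm_num [show lcZ 2 1 1 3 = 0 from by decide]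
@[simp] lemma lcE_2120 : lc 2 1 2 0 = 0 := by rw [lc_cast]; norm_num [show lcZ 2 1 2 0 = 0 from by decide]
@[simp] lemma lcE_2121 : lc 2 1 2 1 = 0 := by rw [lc_cast]; norm_num [show lcZ 2 1 2 1 = 0 from by decide]
@[simp] lemma lcE_2122 : lc 2 1 2 2 = 0 := by rw [lc_cast]; norm_num [show lcZ 2 1 2 2 = 0 from by decide]
@[simp] lemma lcE_2123 : lc 2 1 2 3 = 0 := by rw [lc_cast]; norm_num [show lcZ 2 1 2 3 = 0 from by decide]
@[simp] lemma lcE_2130 : lc 2 1 3 0 = 1 := by rw [lc_cast]; norm_num [show lcZ 2 1 3 0 = 1 from by decide]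
@[simp] lemma lcE_2131 : lc 2 1 3 1 = 0 := by rw [lc_cast]; norm_num [show lcZ 2 1 3 1 = 0 from by decide]
@[simp] lemma lcE_2132 : lc 2 1 3 2 = 0 := by rw [lc_cast]; norm_num [show lcZ 2 1 3 2 = 0 from by decide]
@[simp] lemma lcE_2133 : lc 2 1 3 3 = 0 := by rw [lc_cast]; norm_num [show lcZ 2 1 3 3 = 0 from by decide]
@[simp] lemma lcE_2200 : lc 2 2 0 0 = 0 := by rw [lc_cast]; norm_num [show lcZ 2 2 0 0 = 0 from by decide]
@[simp] lemma lcE_2201 : lc 2 2 0 1 = 0 := by rw [lc_cast]; norm_num [show lcZ 2 2 0 1 = 0 from by decide]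
@[simp] lemma lcE_2202 : lc 2 2 0 2 = 0 := by rw [lc_cast]; norm_num [show lcZ 2 2 0 2 = 0 from by decide]
@[simp] lemma lcE_2203 : lc 2 2 0 3 = 0 := by rw [lc_cast]; norm_num [show lcZ 2 2 0 3 = 0 from by decide]
@[simp] lemma lcE_2210 : lc 2 2 1 0 = 0 := by rw [lc_cast]; norm_num [show lcZ 2 2 1 0 = 0 from by decide]
@[simp] lemma lcE_2211 : lc 2 2 1 1 = 0 := by rw [lc_cast]; norm_num [show lcZ 2 2 1 1 = 0 from by decide]
@[simp] lemma lcE_2212 : lc 2 2 1 2 = 0 := by rw [lc_cast]; norm_num [show lcZ 2 2 1 2 = 0 from by decide]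
@[simp] lemma lcE_2213 : lc 2 2 1 3 = 0 := by rw [lc_cast]; norm_num [show lcZ 2 2 1 3 = 0 from by decide]
@[simp] lemma lcE_2220 : lc 2 2 2 0 = 0 := by rw [lc_cast]; norm_num [show lcZ 2 2 2 0 = 0 from by decide]
@[simp] lemma lcE_2221 : lc 2 2 2 1 = 0 := by rw [lc_cast]; norm_num [show lcZ 2 2 2 1 = 0 from by decide]
@[simp] lemma lcE_2222 : lc 2 2 2 2 = 0 := by rw [lc_cast]; norm_num [show lcZ 2 2 2 2 = 0 from by decide]
@[simp] lemma lcE_2223 : lc 2 2 2 3 = 0 := by rw [lc_cast]; norm_num [show lcZ 2 2 2 3 = 0 from by decide]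
@[simp] lemma lcE_2230 : lc 2 2 3 0 = 0 := by rw [lc_cast]; norm_num [show lcZ 2 2 3 0 = 0 from by decide]
@[simp] lemma lcE_2231 : lc 2 2 3 1 = 0 := by rw [lc_cast]; norm_num [show lcZ 2 2 3 1 = 0 from by decide]
@[simp] lemma lcE_2232 : lc 2 2 3 2 = 0 := by rw [lc_cast]; norm_num [show lcZ 2 2 3 2 = 0 from by decide]
@[simp] lemma lcE_2233 : lc 2 2 3 3 = 0 := by rw [lc_cast]; norm_num [show lcZ 2 2 3 3 = 0 from by decide]
@[simp] lemma lcE_2300 : lc 2 3 0 0 = 0 := by rw [lc_cast]; norm_num [show lcZ 2 3 0 0 = 0 from by decide]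
@[simp] lemma lcE_2301 : lc 2 3 0 1 = 1 := by rw [lc_cast]; norm_num [show lcZ 2 3 0 1 = 1 from by decide]
@[simp] lemma lcE_2302 : lc 2 3 0 2 = 0 := by rw [lc_cast]; norm_num [show lcZ 2 3 0 2 = 0 from by decide]
@[simp] lemma lcE_2303 : lc 2 3 0 3 = 0 := by rw [lc_cast]; norm_num [show lcZ 2 3 0 3 = 0 from by decide]
@[simp] lemma lcE_2310 : lc 2 3 1 0 = -1 := by rw [lc_cast]; norm_num [show lcZ 2 3 1 0 = -1 from by decide]
@[simp] lemma lcE_2311 : lc 2 3 1 1 = 0 := by rw [lc_cast]; norm_num [show lcZ 2 3 1 1 = 0 from by decide]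
@[simp] lemma lcE_2312 : lc 2 3 1 2 = 0 := by rw [lc_cast]; norm_num [show lcZ 2 3 1 2 = 0 from by decide]
@[simp] lemma lcE_2313 : lc 2 3 1 3 = 0 := by rw [lc_cast]; norm_num [show lcZ 2 3 1 3 = 0 from by decide]
@[simp] lemma lcE_2320 : lc 2 3 2 0 = 0 := by rw [lc_cast]; norm_num [show lcZ 2 3 2 0 = 0 from by decide]
@[simp] lemma lcE_2321 : lc 2 3 2 1 = 0 := by rw [lc_cast]; norm_num [show lcZ 2 3 2 1 = 0 from by decide]
@[simp] lemma lcE_2322 : lc 2 3 2 2 = 0 := by rw [lc_cast]; norm_num [show lcZ 2 3 2 2 = 0 from by decide]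
@[simp] lemma lcE_2323 : lc 2 3 2 3 = 0 := by rw [lc_cast]; norm_num [show lcZ 2 3 2 3 = 0 from by decide]
@[simp] lemma lcE_2330 : lc 2 3 3 0 = 0 := by rw [lc_cast]; norm_num [show lcZ 2 3 3 0 = 0 from by decide]
@[simp] lemma lcE_2331 : lc 2 3 3 1 = 0 := by rw [lc_cast]; norm_num [show lcZ 2 3 3 1 = 0 from by decide]
@[simp] lemma lcE_2332 : lc 2 3 3 2 = 0 := by rw [lc_cast]; norm_num [show lcZ 2 3 3 2 = 0 from by decide]
@[simp] lemma lcE_2333 : lc 2 3 3 3 = 0 := by rw [lc_cast]; norm_num [show lcZ 2 3 3 3 = 0 from by decide]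
@[simp] lemma lcE_3000 : lc 3 0 0 0 = 0 := by rw [lc_cast]; norm_num [show lcZ 3 0 0 0 = 0 from by decide]
@[simp] lemma lcE_3001 : lc 3 0 0 1 = 0 := by rw [lc_cast]; norm_num [show lcZ 3 0 0 1 = 0 from by decide]
@[simp] lemma lcE_3002 : lc 3 0 0 2 = 0 := by rw [lc_cast]; norm_num [show lcZ 3 0 0 2 = 0 from by decide]
@[simp] lemma lcE_3003 : lc 3 0 0 3 = 0 := by rw [lc_cast]; norm_num [show lcZ 3 0 0 3 = 0 from by decide]
@[simp] lemma lcE_3010 : lc 3 0 1 0 = 0 := by rw [lc_cast]; norm_num [show lcZ 3 0 1 0 = 0 from by decide]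
@[simp] lemma lcE_3011 : lc 3 0 1 1 = 0 := by rw [lc_cast]; norm_num [show lcZ 3 0 1 1 = 0 from by decide]
@[simp] lemma lcE_3012 : lc 3 0 1 2 = -1 := by rw [lc_cast]; norm_num [show lcZ 3 0 1 2 = -1 from by decide]
@[simp] lemma lcE_3013 : lc 3 0 1 3 = 0 := by rw [lc_cast]; norm_num [show lcZ 3 0 1 3 = 0 from by decide]
@[simp] lemma lcE_3020 : lc 3 0 2 0 = 0 := by rw [lc_cast]; norm_num [show lcZ 3 0 2 0 = 0 from by decide]
@[simp] lemma lcE_3021 : lc 3 0 2 1 = 1 := by rw [lc_cast]; norm_num [show lcZ 3 0 2 1 = 1 from by decide]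
@[simp] lemma lcE_3022 : lc 3 0 2 2 = 0 := by rw [lc_cast]; norm_num [show lcZ 3 0 2 2 = 0 from by decide]
@[simp] lemma lcE_3023 : lc 3 0 2 3 = 0 := by rw [lc_cast]; norm_num [show lcZ 3 0 2 3 = 0 from by decide]
@[simp] lemma lcE_3030 : lc 3 0 3 0 = 0 := by rw [lc_cast]; norm_num [show lcZ 3 0 3 0 = 0 from by decide]
@[simp] lemma lcE_3031 : lc 3 0 3 1 = 0 := by rw [lc_cast]; norm_num [show lcZ 3 0 3 1 = 0 from by decide]
@[simp] lemma lcE_3032 : lc 3 0 3 2 = 0 := by rw [lc_cast]; norm_num [show lcZ 3 0 3 2 = 0 from by decide]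
@[simp] lemma lcE_3033 : lc 3 0 3 3 = 0 := by rw [lc_cast]; norm_num [show lcZ 3 0 3 3 = 0 from by decide]
@[simp] lemma lcE_3100 : lc 3 1 0 0 = 0 := by rw [lc_cast]; norm_num [show lcZ 3 1 0 0 = 0 from by decide]
@[simp] lemma lcE_3101 : lc 3 1 0 1 = 0 := by rw [lc_cast]; norm_num [show lcZ 3 1 0 1 = 0 from by decide]
@[simp] lemma lcE_3102 : lc 3 1 0 2 = 1 := by rw [lc_cast]; norm_num [show lcZ 3 1 0 2 = 1 from by decide]
@[simp] lemma lcE_3103 : lc 3 1 0 3 = 0 := by rw [lc_cast]; norm_num [show lcZ 3 1 0 3 = 0 from by decide]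
@[simp] lemma lcE_3110 : lc 3 1 1 0 = 0 := by rw [lc_cast]; norm_num [show lcZ 3 1 1 0 = 0 from by decide]
@[simp] lemma lcE_3111 : lc 3 1 1 1 = 0 := by rw [lc_cast]; norm_num [show lcZ 3 1 1 1 = 0 from by decide]
@[simp] lemma lcE_3112 : lc 3 1 1 2 = 0 := by rw [lc_cast]; norm_num [show lcZ 3 1 1 2 = 0 from by decide]
@[simp] lemma lcE_3113 : lc 3 1 1 3 = 0 := by rw [lc_cast]; norm_num [show lcZ 3 1 1 3 = 0 from by decide]
@[simp] lemma lcE_3120 : lc 3 1 2 0 = -1 := by rw [lc_cast]; norm_num [show lcZ 3 1 2 0 = -1 from by decide]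
@[simp] lemma lcE_3121 : lc 3 1 2 1 = 0 := by rw [lc_cast]; norm_num [show lcZ 3 1 2 1 = 0 from by decide]
@[simp] lemma lcE_3122 : lc 3 1 2 2 = 0 := by rw [lc_cast]; norm_num [show lcZ 3 1 2 2 = 0 from by decide]
@[simp] lemma lcE_3123 : lc 3 1 2 3 = 0 := by rw [lc_cast]; norm_num [show lcZ 3 1 2 3 = 0 from by decide]
@[simp] lemma lcE_3130 : lc 3 1 3 0 = 0 := by rw [lc_cast]; norm_num [show lcZ 3 1 3 0 = 0 from by decide]
@[simp] lemma lcE_3131 : lc 3 1 3 1 = 0 := by rw [lc_cast]; norm_num [show lcZ 3 1 3 1 = 0 from by decide]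
@[simp] lemma lcE_3132 : lc 3 1 3 2 = 0 := by rw [lc_cast]; norm_num [show lcZ 3 1 3 2 = 0 from by decide]
@[simp] lemma lcE_3133 : lc 3 1 3 3 = 0 := by rw [lc_cast]; norm_num [show lcZ 3 1 3 3 = 0 from by decide]
@[simp] lemma lcE_3200 : lc 3 2 0 0 = 0 := by rw [lc_cast]; norm_num [show lcZ 3 2 0 0 = 0 from by decide]
@[simp] lemma lcE_3201 : lc 3 2 0 1 = -1 := by rw [lc_cast]; norm_num [show lcZ 3 2 0 1 = -1 from by decide]
@[simp] lemma lcE_3202 : lc 3 2 0 2 = 0 := by rw [lc_cast]; norm_num [show lcZ 3 2 0 2 = 0 from by decide]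
@[simp] lemma lcE_3203 : lc 3 2 0 3 = 0 := by rw [lc_cast]; norm_num [show lcZ 3 2 0 3 = 0 from by decide]
@[simp] lemma lcE_3210 : lc 3 2 1 0 = 1 := by rw [lc_cast]; norm_num [show lcZ 3 2 1 0 = 1 from by decide]
@[simp] lemma lcE_3211 : lc 3 2 1 1 = 0 := by rw [lc_cast]; norm_num [show lcZ 3 2 1 1 = 0 from by decide]
@[simp] lemma lcE_3212 : lc 3 2 1 2 = 0 := by rw [lc_cast]; norm_num [show lcZ 3 2 1 2 = 0 from by decide]
@[simp] lemma lcE_3213 : lc 3 2 1 3 = 0 := by rw [lc_cast]; norm_num [show lcZ 3 2 1 3 = 0 from by decide]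
@[simp] lemma lcE_3220 : lc 3 2 2 0 = 0 := by rw [lc_cast]; norm_num [show lcZ 3 2 2 0 = 0 from by decide]
@[simp] lemma lcE_3221 : lc 3 2 2 1 = 0 := by rw [lc_cast]; norm_num [show lcZ 3 2 2 1 = 0 from by decide]
@[simp] lemma lcE_3222 : lc 3 2 2 2 = 0 := by rw [lc_cast]; norm_num [show lcZ 3 2 2 2 = 0 from by decide]
@[simp] lemma lcE_3223 : lc 3 2 2 3 = 0 := by rw [lc_cast]; norm_num [show lcZ 3 2 2 3 = 0 from by decide]
@[simp] lemma lcE_3230 : lc 3 2 3 0 = 0 := by rw [lc_cast]; norm_num [show lcZ 3 2 3 0 = 0 from by decide]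
@[simp] lemma lcE_3231 : lc 3 2 3 1 = 0 := by rw [lc_cast]; norm_num [show lcZ 3 2 3 1 = 0 from by decide]
@[simp] lemma lcE_3232 : lc 3 2 3 2 = 0 := by rw [lc_cast]; norm_num [show lcZ 3 2 3 2 = 0 from by decide]
@[simp] lemma lcE_3233 : lc 3 2 3 3 = 0 := by rw [lc_cast]; norm_num [show lcZ 3 2 3 3 = 0 from by decide]
@[simp] lemma lcE_3300 : lc 3 3 0 0 = 0 := by rw [lc_cast]; norm_num [show lcZ 3 3 0 0 = 0 from by decide]
@[simp] lemma lcE_3301 : lc 3 3 0 1 = 0 := by rw [lc_cast]; norm_num [show lcZ 3 3 0 1 = 0 from by decide]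
@[simp] lemma lcE_3302 : lc 3 3 0 2 = 0 := by rw [lc_cast]; norm_num [show lcZ 3 3 0 2 = 0 from by decide]
@[simp] lemma lcE_3303 : lc 3 3 0 3 = 0 := by rw [lc_cast]; norm_num [show lcZ 3 3 0 3 = 0 from by decide]
@[simp] lemma lcE_3310 : lc 3 3 1 0 = 0 := by rw [lc_cast]; norm_num [show lcZ 3 3 1 0 = 0 from by decide]
@[simp] lemma lcE_3311 : lc 3 3 1 1 = 0 := by rw [lc_cast]; norm_num [show lcZ 3 3 1 1 = 0 from by decide]
@[simp] lemma lcE_3312 : lc 3 3 1 2 = 0 := by rw [lc_cast]; norm_num [show lcZ 3 3 1 2 = 0 from by decide]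
@[simp] lemma lcE_3313 : lc 3 3 1 3 = 0 := by rw [lc_cast]; norm_num [show lcZ 3 3 1 3 = 0 from by decide]
@[simp] lemma lcE_3320 : lc 3 3 2 0 = 0 := by rw [lc_cast]; norm_num [show lcZ 3 3 2 0 = 0 from by decide]
@[simp] lemma lcE_3321 : lc 3 3 2 1 = 0 := by rw [lc_cast]; norm_num [show lcZ 3 3 2 1 = 0 from by decide]
@[simp] lemma lcE_3322 : lc 3 3 2 2 = 0 := by rw [lc_cast]; norm_num [show lcZ 3 3 2 2 = 0 from by decide]
@[simp] lemma lcE_3323 : lc 3 3 2 3 = 0 := by rw [lc_cast]; norm_num [show lcZ 3 3 2 3 = 0 from by decide]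
@[simp] lemma lcE_3330 : lc 3 3 3 0 = 0 := by rw [lc_cast]; norm_num [show lcZ 3 3 3 0 = 0 from by decide]
@[simp] lemma lcE_3331 : lc 3 3 3 1 = 0 := by rw [lc_cast]; norm_num [show lcZ 3 3 3 1 = 0 from by decide]
@[simp] lemma lcE_3332 : lc 3 3 3 2 = 0 := by rw [lc_cast]; norm_num [show lcZ 3 3 3 2 = 0 from by decide]
@[simp] lemma lcE_3333 : lc 3 3 3 3 = 0 := by rw [lc_cast]; norm_num [show lcZ 3 3 3 3 = 0 from by decide]

set_option maxRecDepth 8000 in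
set_option maxHeartbeats 4000000 in
/-- the Hadamard discontinuity relations of Maxwell's equations inside a
nonlinear dielectric imply the effective-metric dispersion relation for the wave vector. -/
theorem nonlinear_dielectric_dispersion
    (v E e h k : Fin 4 → ℝ) (ε ε' μ₀ Ebar : ℝ)
    (hε : ε ≠ 0) (hμ₀ : μ₀ ≠ 0)
    (hvn : mdot v v = 1) (hEv : mdot E v = 0)
    (hEbar : Ebar = Real.sqrt (- mdot E E)) (hEbarpos : 0 < Ebar)
    -- (i)
    (h1 : ε * mdot k e - (ε' / Ebar) * mdot E e * mdot E k = 0)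
    -- (ii)
    (h2 : μ₀ * mdot h k = 0)
    -- (iii)
    (h3 : ∀ μ, ε * mdot k v * e μ - (ε' / Ebar) * mdot E e * mdot k v * E μ
        + (∑ ν, ∑ a, ∑ b, lcup μ ν a b *
            (∑ ρ, η ν ρ * k ρ) * (∑ ρ, η a ρ * v ρ) * (∑ ρ, η b ρ * h ρ)) = 0)
    -- (iv)
    (h4 : ∀ l, μ₀ * mdot k v * h l
        - (∑ b, ∑ r, ∑ s, lcup l b r s *
            (∑ ρ, η b ρ * k ρ) * (∑ ρ, η r ρ * v ρ) * (∑ ρ, η s ρ * e ρ)) = 0)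
    (hEe : mdot E e ≠ 0) (hkv : mdot k v ≠ 0) :
    -- the dispersion relation in the effective metric
    ∑ μ, ∑ ν,
      (η μ ν + (μ₀ * ε - 1 + μ₀ * ε' * Ebar) * v μ * v ν
        - (ε' / (ε * Ebar)) * E μ * E ν)
      * (∑ ρ, η μ ρ * k ρ) * (∑ ρ, η ν ρ * k ρ) = 0 := by
  have h30 := h3 0
  have h31 := h3 1
  have h32 := h3 2
  have h33 := h3 3
  have h40 := h4 0
  have h41 := h4 1
  have h42 := h4 2
  have h43 := h4 3
  have hEb2 : Ebar ^ 2 = - mdot E E := by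
    have h0 : 0 < Real.sqrt (- mdot E E) := hEbar ▸ hEbarpos
    rw [hEbar]; exact Real.sq_sqrt (le_of_lt (Real.sqrt_pos.mp h0))
  simp [mdot, lcup_diag, Fin.sum_univ_four, η]
    at h30 h31 h32 h33 h40 h41 h42 h43 h1 hvn hEv hEe hkv hEb2 ⊢
  have hκ : (k 0 * v 0 - k 1 * v 1 - k 2 * v 2 - k 3 * v 3) ≠ 0 := by intro hh; apply hkv; linear_combination hh
  have hQ : (E 0 * e 0 - E 1 * e 1 - E 2 * e 2 - E 3 * e 3) ≠ 0 := by intro hh; apply hEe; linear_combination hh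
  have h5 : ε * (k 0 * v 0 - k 1 * v 1 - k 2 * v 2 - k 3 * v 3) * (v 0 * e 0 - v 1 * e 1 - v 2 * e 2 - v 3 * e 3) = 0 := by
    linear_combination (v 0) * h30 - (v 1) * h31 - (v 2) * h32 - (v 3) * h33
      + ((ε' / Ebar) * (E 0 * e 0 - E 1 * e 1 - E 2 * e 2 - E 3 * e 3) * (k 0 * v 0 - k 1 * v 1 - k 2 * v 2 - k 3 * v 3)) * hEv
  have hve : (v 0 * e 0 - v 1 * e 1 - v 2 * e 2 - v 3 * e 3) = 0 := by
    rcases mul_eq_zero.mp h5 with hh | hh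
    · exact absurd hh (mul_ne_zero hε hκ)
    · exact hh
  have hEbne : Ebar ≠ 0 := ne_of_gt hEbarpos
  have hW1 : (ε' / Ebar) * Ebar ^ 2 = ε' * Ebar := by
    field_simp
  have hW3 : (ε' / Ebar) * Ebar = ε' := div_mul_cancel₀ ε' hEbne
  have hB1 : (1 / (ε * Ebar)) * (ε * Ebar) = 1 :=
    one_div_mul_cancel (mul_ne_zero hε hEbne)
  have key2 : (E 0 * e 0 - E 1 * e 1 - E 2 * e 2 - E 3 * e 3) * (ε * Ebar * (k 0 * k 0 - k 1 * k 1 - k 2 * k 2 - k 3 * k 3) + (μ₀ * ε - 1 + μ₀ * ε' * Ebar) * (ε * Ebar) * (k 0 * v 0 - k 1 * v 1 - k 2 * v 2 - k 3 * v 3) ^ 2 - ε' * (E 0 * k 0 - E 1 * k 1 - E 2 * k 2 - E 3 * k 3) ^ 2) = 0 := by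
    linear_combination (ε * Ebar * μ₀ * (k 0 * v 0 - k 1 * v 1 - k 2 * v 2 - k 3 * v 3) * (E 0)) * h30
      - (ε * Ebar * μ₀ * (k 0 * v 0 - k 1 * v 1 - k 2 * v 2 - k 3 * v 3) * (E 1)) * h31
      - (ε * Ebar * μ₀ * (k 0 * v 0 - k 1 * v 1 - k 2 * v 2 - k 3 * v 3) * (E 2)) * h32
      - (ε * Ebar * μ₀ * (k 0 * v 0 - k 1 * v 1 - k 2 * v 2 - k 3 * v 3) * (E 3)) * h33
      - (ε * Ebar * (- E 1 * k 2 * v 3 + E 1 * k 3 * v 2 + E 2 * k 1 * v 3 - E 2 * k 3 * v 1 - E 3 * k 1 * v 2 + E 3 * k 2 * v 1)) * h40 - (ε * Ebar * (E 0 * k 2 * v 3 - E 0 * k 3 * v 2 - E 2 * k 0 * v 3 + E 2 * k 3 * v 0 + E 3 * k 0 * v 2 - E 3 * k 2 * v 0)) * h41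
      - (ε * Ebar * (- E 0 * k 1 * v 3 + E 0 * k 3 * v 1 + E 1 * k 0 * v 3 - E 1 * k 3 * v 0 - E 3 * k 0 * v 1 + E 3 * k 1 * v 0)) * h42 - (ε * Ebar * (E 0 * k 1 * v 2 - E 0 * k 2 * v 1 - E 1 * k 0 * v 2 + E 1 * k 2 * v 0 + E 2 * k 0 * v 1 - E 2 * k 1 * v 0)) * h43
      + (μ₀ * ε * Ebar * (k 0 * v 0 - k 1 * v 1 - k 2 * v 2 - k 3 * v 3) ^ 2 * (E 0 * e 0 - E 1 * e 1 - E 2 * e 2 - E 3 * e 3) * (ε' / Ebar)) * hEb2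
      - (μ₀ * ε * Ebar * (k 0 * v 0 - k 1 * v 1 - k 2 * v 2 - k 3 * v 3) ^ 2 * (E 0 * e 0 - E 1 * e 1 - E 2 * e 2 - E 3 * e 3)) * hW1
      + (ε * Ebar * (E 0 * k 0 - E 1 * k 1 - E 2 * k 2 - E 3 * k 3) * (k 0 * e 0 - k 1 * e 1 - k 2 * e 2 - k 3 * e 3) - ε * Ebar * (E 0 * e 0 - E 1 * e 1 - E 2 * e 2 - E 3 * e 3) * (k 0 * k 0 - k 1 * k 1 - k 2 * k 2 - k 3 * k 3)) * hvn
      + (Ebar * (E 0 * k 0 - E 1 * k 1 - E 2 * k 2 - E 3 * k 3)) * h1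
      + ((E 0 * k 0 - E 1 * k 1 - E 2 * k 2 - E 3 * k 3) ^ 2 * (E 0 * e 0 - E 1 * e 1 - E 2 * e 2 - E 3 * e 3)) * hW3
      + (- (ε * Ebar * (E 0 * k 0 - E 1 * k 1 - E 2 * k 2 - E 3 * k 3) * (k 0 * v 0 - k 1 * v 1 - k 2 * v 2 - k 3 * v 3))) * hve
      + (ε * Ebar * ((k 0 * k 0 - k 1 * k 1 - k 2 * k 2 - k 3 * k 3) * (v 0 * e 0 - v 1 * e 1 - v 2 * e 2 - v 3 * e 3) - (k 0 * e 0 - k 1 * e 1 - k 2 * e 2 - k 3 * e 3) * (k 0 * v 0 - k 1 * v 1 - k 2 * v 2 - k 3 * v 3))) * hEv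
  have hG2 : (ε * Ebar * (k 0 * k 0 - k 1 * k 1 - k 2 * k 2 - k 3 * k 3) + (μ₀ * ε - 1 + μ₀ * ε' * Ebar) * (ε * Ebar) * (k 0 * v 0 - k 1 * v 1 - k 2 * v 2 - k 3 * v 3) ^ 2 - ε' * (E 0 * k 0 - E 1 * k 1 - E 2 * k 2 - E 3 * k 3) ^ 2) = 0 := (mul_eq_zero.mp key2).resolve_left hQ
  linear_combination (1 / (ε * Ebar)) * hG2
    + (- ((k 0 * k 0 - k 1 * k 1 - k 2 * k 2 - k 3 * k 3) + (μ₀ * ε - 1 + μ₀ * ε' * Ebar) * (k 0 * v 0 - k 1 * v 1 - k 2 * v 2 - k 3 * v 3) ^ 2)) * hB1
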